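/- Let D be a symmetric digraph and let u, v be distinct vertices of D, with S = {u, v}. Then D contains two arc-disjoint S-cycles if and only if the underlying undirected graph of D contains two internally disjoint paths between u and v. -/

import Mathlib

open List SimpleGraph

section helpers

variable {α : Type*}

lemma mem_zip_tail_iff {l : List α} {pr : α × α} :
    pr ∈ l.zip l.tail ↔ ∃ t1 t2, l = t1 ++ pr.1 :: pr.2 :: t2 := by
  induction l with
  | nil => simp
  | cons x xs ih =>
    cases xs with
    | nil =>
      simp only [List.zip_nil_right, List.tail_cons, List.not_mem_nil, false_iff]
      rintro ⟨t1, t2, h⟩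
      have := congrArg List.length h
      simp at this
      omega
    | cons y ys =>
      have hz : (x :: y :: ys).zip (x :: y :: ys).tail
          = (x, y) :: ((y :: ys).zip (y :: ys).tail) := rfl
      rw [hz, List.mem_cons]
      constructor
      · rintro (h | h)
        · exact ⟨[], ys, by simp_all⟩
        · obtain ⟨t1, t2, ht⟩ := ih.mp h
          exact ⟨x :: t1, t2, by simp [ht]⟩
      · rintro ⟨t1, t2, ht⟩
        cases t1 with
        | nil =>
          simp only [List.nil_append, List.cons.injEq] at ht
          exact Or.inl (by cases pr; simp_all)
        | cons z t1' =>
          simp only [List.cons_append, List.cons.injEq] at ht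
          exact Or.inr (ih.mpr ⟨t1', t2, ht.2⟩)

lemma mem_zip_tail_mem {l : List α} {pr : α × α} (h : pr ∈ l.zip l.tail) :
    pr.1 ∈ l ∧ pr.2 ∈ l := by
  obtain ⟨t1, t2, rfl⟩ := mem_zip_tail_iff.mp h
  simp

lemma mem_zip_tail_ne {l : List α} {pr : α × α} (hnd : l.Nodup) (h : pr ∈ l.zip l.tail) :
    pr.1 ≠ pr.2 := by
  obtain ⟨t1, t2, rfl⟩ := mem_zip_tail_iff.mp h
  intro he
  rw [List.nodup_append] at hnd
  have := hnd.2.1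
  rw [List.nodup_cons] at this
  exact this.1 (he ▸ List.mem_cons_self)

lemma zip_tail_append_right {l r : List α} {pr : α × α} (h : pr ∈ l.zip l.tail) :
    pr ∈ (l ++ r).zip (l ++ r).tail := by
  obtain ⟨t1, t2, rfl⟩ := mem_zip_tail_iff.mp h
  exact mem_zip_tail_iff.mpr ⟨t1, t2 ++ r, by simp⟩

lemma zip_tail_append_left {l r : List α} {pr : α × α} (h : pr ∈ r.zip r.tail) :
    pr ∈ (l ++ r).zip (l ++ r).tail := by
  obtain ⟨t1, t2, rfl⟩ := mem_zip_tail_iff.mp h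
  exact mem_zip_tail_iff.mpr ⟨l ++ t1, t2, by simp⟩

lemma zip_tail_reverse {l : List α} {a b : α} :
    (a, b) ∈ l.reverse.zip l.reverse.tail ↔ (b, a) ∈ l.zip l.tail := by
  rw [mem_zip_tail_iff, mem_zip_tail_iff]
  constructor
  · rintro ⟨t1, t2, ht⟩
    refine ⟨t2.reverse, t1.reverse, ?_⟩
    have := congrArg List.reverse ht
    simpa using this
  · rintro ⟨t1, t2, ht⟩
    refine ⟨t2.reverse, t1.reverse, ?_⟩
    have := congrArg List.reverse ht
    simpa using this

lemma indexOf_append_cons [DecidableEq α] {a : α} {t1 t2 : List α} (h : a ∉ t1) :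
    (t1 ++ a :: t2).idxOf a = t1.length := by
  rw [List.idxOf_append_of_notMem h, List.idxOf_cons_self]
  simp

lemma no_both_directions {l : List α} (hnd : l.Nodup) {a b : α}
    (h1 : (a, b) ∈ l.zip l.tail) (h2 : (b, a) ∈ l.zip l.tail) : False := by
  classical
  obtain ⟨t1, t2, he1⟩ := mem_zip_tail_iff.mp h1
  obtain ⟨s1, s2, he2⟩ := mem_zip_tail_iff.mp h2
  simp only at he1 he2
  have hnd1 := he1 ▸ hnd
  have hnd2 := he2 ▸ hnd
  simp only [List.nodup_append, List.nodup_cons, List.mem_cons, List.disjoint_cons_right,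
    List.disjoint_cons_left] at hnd1 hnd2
  have ha1 : a ∉ t1 := by tauto
  have hb1 : b ∉ t1 ++ [a] := by
    simp only [List.mem_append, List.mem_singleton]
    rintro (hm | rfl)
    · exact hnd1.2.2 b hm b (Or.inr (Or.inl rfl)) rfl
    · tauto
  have hb2 : b ∉ s1 := by tauto
  have ha2 : a ∉ s1 ++ [b] := by
    simp only [List.mem_append, List.mem_singleton]
    rintro (hm | rfl)
    · exact hnd2.2.2 a hm a (Or.inr (Or.inl rfl)) rfl
    · tauto
  have e1 : l.idxOf a = t1.length := he1 ▸ indexOf_append_cons ha1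
  have e2 : l.idxOf b = t1.length + 1 := by
    rw [he1]
    have h3 : t1 ++ a :: b :: t2 = (t1 ++ [a]) ++ b :: t2 := by simp
    rw [h3, indexOf_append_cons hb1]
    simp
  have e3 : l.idxOf b = s1.length := he2 ▸ indexOf_append_cons hb2
  have e4 : l.idxOf a = s1.length + 1 := by
    rw [he2]
    have h3 : s1 ++ b :: a :: s2 = (s1 ++ [b]) ++ a :: s2 := by simp
    rw [h3, indexOf_append_cons ha2]
    simp
  omega

lemma zip_append_left_trunc : ∀ (a : List α) (c b : List α), b.length ≤ a.length →
    (a ++ c).zip b = a.zip b := by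
  intro a
  induction a with
  | nil => intro c b hb; cases b <;> simp_all
  | cons x a' ih =>
    intro c b hb
    cases b with
    | nil => simp
    | cons y b' =>
      simp only [List.cons_append, List.zip_cons_cons, List.cons.injEq, true_and]
      exact ih c b' (by simpa using hb)

lemma consec_append_split : ∀ (s : List α) (x : α) (t : List α) (pr : α × α),
    pr ∈ (s ++ x :: t).zip (s ++ x :: t).tail →
    pr ∈ (s ++ [x]).zip (s ++ [x]).tail ∨ pr ∈ (x :: t).zip (x :: t).tail := by
  intro s
  induction s with
  | nil => intro x t pr h; exact Or.inr (by simpa using h)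
  | cons y s' ih =>
    intro x t pr h
    rw [List.cons_append] at h
    have hM : ∃ z M', s' ++ x :: t = z :: M' := by
      cases s' with
      | nil => exact ⟨x, t, rfl⟩
      | cons w s'' => exact ⟨w, s'' ++ x :: t, rfl⟩
    obtain ⟨z, M', hzM⟩ := hM
    rw [hzM] at h
    rw [show (y :: z :: M').zip (y :: z :: M').tail
        = (y, z) :: ((z :: M').zip (z :: M').tail) from rfl, List.mem_cons] at h
    rcases h with rfl | h
    · -- pr = (y, z); z is head of s' ++ x :: t, i.e. head of s' ++ [x]
      left
      cases s' with
      | nil =>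
        simp only [List.nil_append, List.cons.injEq] at hzM
        exact mem_zip_tail_iff.mpr ⟨[], [], by simp [hzM.1]⟩
      | cons w s'' =>
        simp only [List.cons_append, List.cons.injEq] at hzM
        exact mem_zip_tail_iff.mpr ⟨[], s'' ++ [x], by simp [hzM.1]⟩
    · rw [← hzM] at h
      rcases ih x t pr h with h' | h'
      · exact Or.inl (zip_tail_append_left (l := [y]) h')
      · exact Or.inr h'

lemma L_head {s : List α} {x u : α} (hnd : s.Nodup) (hh : s = u :: s.tail)
    (h : (x, u) ∈ s.zip s.tail) : False := by
  obtain ⟨t1, t2, he⟩ := mem_zip_tail_iff.mp h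
  simp only at he
  cases t1 with
  | nil =>
    simp only [List.nil_append] at he
    rw [he] at hnd hh
    simp only [List.tail_cons, List.cons.injEq] at hh
    obtain ⟨rfl, -⟩ := hh
    simp at hnd
  | cons c t1' =>
    rw [hh] at he
    simp only [List.cons_append, List.cons.injEq] at he
    have : u ∈ s.tail := by
      rw [he.2]
      simp
    rw [hh] at hnd
    exact (List.nodup_cons.mp hnd).1 this

lemma L_pair {s : List α} {u v : α} (hnd : s.Nodup) (hh : s = u :: s.tail)
    (hl : s.getLast? = some v) (h : (u, v) ∈ s.zip s.tail) : s = [u, v] := by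
  obtain ⟨t1, t2, he⟩ := mem_zip_tail_iff.mp h
  simp only at he
  cases t1 with
  | nil =>
    simp only [List.nil_append] at he
    rw [he]
    rw [he] at hnd hl
    cases t2 with
    | nil => rfl
    | cons w t2' =>
      exfalso
      have hlast : (u :: v :: w :: t2').getLast? = ((w :: t2').getLast?) := by
        simp [List.getLast?_cons_cons]
      rw [hlast] at hl
      have hgl := List.getLast?_eq_getLast (l := w :: t2') (by simp)
      rw [hgl, Option.some.injEq] at hl
      have hmem : v ∈ w :: t2' := hl ▸ List.getLast_mem (by simp)
      have h4 := List.nodup_cons.mp (List.nodup_cons.mp hnd).2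
      exact h4.1 hmem
  | cons c t1' =>
    exfalso
    rw [hh] at he
    simp only [List.cons_append, List.cons.injEq] at he
    have : u ∈ s.tail := by
      rw [he.2]
      simp
    rw [hh] at hnd
    exact (List.nodup_cons.mp hnd).1 this

end helpers

/-- A directed cycle in a digraph `D`, represented by its (nonempty, duplicate-free)
list of vertices in cyclic order; consecutive vertices (cyclically) are joined by arcs. -/
def IsDiCycle {V : Type*} (D : Digraph V) (l : List V) : Prop :=
  l.Nodup ∧ 2 ≤ l.length ∧ ∀ p ∈ l.zip (l.rotate 1), D.Adj p.1 p.2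

/-- The set of arcs traversed by a cycle given by the vertex list `l`. -/
def cycArcs {V : Type*} (l : List V) : Set (V × V) :=
  {p | p ∈ l.zip (l.rotate 1)}

/-- An `S`-cycle: a directed cycle whose vertex set contains `S`. -/
def IsSCycle {V : Type*} (D : Digraph V) (S : Set V) (l : List V) : Prop :=
  IsDiCycle D l ∧ ∀ s ∈ S, s ∈ l

/-- `D` contains `m` pairwise arc-disjoint `S`-cycles. -/
def ArcDisjointSCycles {V : Type*} (D : Digraph V) (S : Set V) (m : ℕ) : Prop :=
  ∃ f : Fin m → List V, (∀ i, IsSCycle D S (f i)) ∧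
    ∀ i j, i ≠ j → Disjoint (cycArcs (f i)) (cycArcs (f j))

/-- `λ_S^c(D)`: the maximum number of pairwise arc-disjoint `S`-cycles in `D`. -/
noncomputable def lambdaS {V : Type*} (D : Digraph V) (S : Set V) : ℕ :=
  sSup {m | ArcDisjointSCycles D S m}

/-- `λ_k^c(D)`: the directed cycle `k`-arc-connectivity of `D`, the minimum of
`λ_S^c(D)` over all vertex subsets `S` of size `k`. -/
noncomputable def lambdaK {V : Type*} [Fintype V] (D : Digraph V) (k : ℕ) : ℕ :=
  sInf {m | ∃ S : Finset V, S.card = k ∧ lambdaS D ↑S = m}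

/-- The underlying undirected simple graph of a digraph `D`. -/
def underlyingGraph {V : Type*} (D : Digraph V) : SimpleGraph V where
  Adj x y := x ≠ y ∧ (D.Adj x y ∨ D.Adj y x)
  symm := ⟨fun x y h => ⟨h.1.symm, h.2.symm⟩⟩
  loopless := ⟨fun x h => h.1 rfl⟩

section cychelpers

variable {V : Type*}

lemma cycArcs_cons (x : V) (xs : List V) :
    cycArcs (x :: xs) = {pr | pr ∈ ((x :: xs) ++ [x]).zip (((x :: xs) ++ [x]).tail)} := by
  have h1 : (x :: xs).rotate 1 = xs ++ [x] := by
    rw [show (1 : ℕ) = 0 + 1 from rfl, List.rotate_cons_succ, List.rotate_zero]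
  have h2 : ((x :: xs) ++ [x]).tail = xs ++ [x] := rfl
  unfold cycArcs
  rw [h1, h2, zip_append_left_trunc (x :: xs) [x] (xs ++ [x]) (by simp)]

lemma zip_rotate_one (a b : List V) (h : a.length = b.length) :
    (a.rotate 1).zip (b.rotate 1) = (a.zip b).rotate 1 := by
  cases a with
  | nil => cases b <;> simp_all
  | cons x xs =>
    cases b with
    | nil => simp_all
    | cons y ys =>
      have hl : xs.length = ys.length := by simpa using h
      rw [show (1:ℕ) = 0 + 1 from rfl, List.rotate_cons_succ, List.rotate_cons_succ,
        List.zip_cons_cons, List.rotate_cons_succ]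
      simp only [List.rotate_zero]
      rw [List.zip_append hl]
      rfl

lemma cycArcs_rotate_one (l : List V) : cycArcs (l.rotate 1) = cycArcs l := by
  ext pr
  unfold cycArcs
  simp only [Set.mem_setOf_eq]
  rw [zip_rotate_one l (l.rotate 1) (by simp), List.mem_rotate]

lemma cycArcs_rotate (l : List V) (n : ℕ) : cycArcs (l.rotate n) = cycArcs l := by
  induction n with
  | zero => simp [List.rotate_zero]
  | succ n ih =>
    rw [← List.rotate_rotate, cycArcs_rotate_one, ih]

variable {G : SimpleGraph V}

lemma walk_zip_tail {x y : V} (w : G.Walk x y) :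
    ∀ pr ∈ w.support.zip w.support.tail, G.Adj pr.1 pr.2 := by
  induction w with
  | nil => simp
  | @cons a b c h w ih =>
    intro pr hpr
    rw [Walk.support_cons] at hpr
    rw [w.support_eq_cons] at hpr ih
    rw [show (a :: b :: w.support.tail).zip (a :: b :: w.support.tail).tail
        = (a, b) :: ((b :: w.support.tail).zip (b :: w.support.tail).tail) from rfl,
      List.mem_cons] at hpr
    rcases hpr with rfl | hpr
    · exact h
    · exact ih pr hpr

lemma walk_of_chain : ∀ (s : List V) (x y : V),
    (∀ pr ∈ (x :: (s ++ [y])).zip (s ++ [y]), G.Adj pr.1 pr.2) →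
    ∃ w : G.Walk x y, w.support = x :: (s ++ [y]) := by
  intro s
  induction s with
  | nil =>
    intro x y h
    have hadj : G.Adj x y := h (x, y) (by simp)
    exact ⟨Walk.cons hadj Walk.nil, by simp⟩
  | cons z s' ih =>
    intro x y h
    have hadj : G.Adj x z := h (x, z) (by simp)
    obtain ⟨w, hw⟩ := ih z y (fun pr hpr => h pr (by
      rw [show (x :: ((z :: s') ++ [y])).zip ((z :: s') ++ [y])
          = (x, z) :: ((z :: (s' ++ [y])).zip (s' ++ [y])) from rfl, List.mem_cons]
      exact Or.inr hpr))
    exact ⟨Walk.cons hadj w, by simp [hw]⟩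

lemma walk_eq_cons_nil {u v : V} (w : G.Walk u v) (h : w.support = [u, v]) :
    ∃ (ha : G.Adj u v), w = Walk.cons ha Walk.nil := by
  cases w with
  | nil => simp at h
  | @cons _ b _ ha wa =>
    rw [Walk.support_cons] at h
    have hwa : wa.support = [v] := by simpa using h
    have hb : b = v := by
      have h2 := wa.support_eq_cons
      rw [hwa] at h2
      exact (List.cons.inj h2).1.symm
    subst hb
    have hnil : wa = Walk.nil := by
      cases wa with
      | nil => rfl
      | cons hc wc =>
        rw [Walk.support_cons] at hwa
        have : wc.support = [] := by simpa using hwa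
        exact absurd this wc.support_ne_nil
    subst hnil
    exact ⟨ha, rfl⟩

lemma walk_support_pair {u v : V} (w : G.Walk u v) (h : w.support = [u, v])
    (w' : G.Walk u v) (h' : w'.support = [u, v]) : w = w' := by
  obtain ⟨ha, rfl⟩ := walk_eq_cons_nil w h
  obtain ⟨hb, rfl⟩ := walk_eq_cons_nil w' h'
  rfl

lemma support_tail_ne_nil {x y : V} (w : G.Walk x y) (h : x ≠ y) :
    w.support.tail ≠ [] := by
  cases w with
  | nil => exact absurd rfl h
  | cons ha wa =>
    rw [Walk.support_cons]
    simpa using wa.support_ne_nil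

end cychelpers

section core

variable {V : Type*}

lemma cycle_split (D : Digraph V) (hloopless : ∀ v, ¬ D.Adj v v)
    {u v : V} (huv : u ≠ v) {l : List V}
    (hC : IsDiCycle D l) (hu : u ∈ l) (hv : v ∈ l) :
    ∃ p q : (underlyingGraph D).Walk u v, p.IsPath ∧ q.IsPath ∧
      (∀ w, w ∈ p.support → w ∈ q.support → w = u ∨ w = v) ∧
      (p.support = [u, v] → (u, v) ∈ cycArcs l) ∧
      (p ≠ q ∨ (p.support = [u, v] ∧ q.support = [u, v])) := by
  obtain ⟨c1, c2, rfl⟩ := List.append_of_mem hu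
  set l := c1 ++ u :: c2 with hl
  have hrot : l.rotate c1.length = (u :: c2) ++ c1 := by
    rw [List.rotate_eq_drop_append_take (by simp [hl]), hl, List.drop_left,
      List.take_left]
  have hndm : ((u :: c2) ++ c1).Nodup := by
    rw [← hrot]; exact List.nodup_rotate.mpr hC.1
  have harcs : cycArcs ((u :: c2) ++ c1) = cycArcs l := by
    rw [← hrot, cycArcs_rotate]
  have hvm : v ∈ c2 ++ c1 := by
    have : v ∈ (u :: c2) ++ c1 := by
      rw [← hrot, List.mem_rotate]; exact hv
    rcases (by simpa using this : v = u ∨ v ∈ c2 ∨ v ∈ c1) with h | h | h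
    · exact absurd h.symm huv
    · exact List.mem_append_left _ h
    · exact List.mem_append_right _ h
  obtain ⟨a, b, hab⟩ := List.append_of_mem hvm
  have hm : (u :: c2) ++ c1 = u :: (a ++ v :: b) := by
    rw [List.cons_append, hab]
  rw [hm] at hndm harcs
  -- nodup facts
  have hnd := hndm
  simp only [List.nodup_cons, List.mem_append, List.mem_cons, List.nodup_append,
    List.disjoint_cons_right] at hnd
  have hua : u ∉ a := by tauto
  have hub : u ∉ b := by tauto
  have huv' : u ≠ v := huv
  have hva : v ∉ a := by tauto
  have hvb : v ∉ b := by tauto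
  have hand : a.Nodup := by tauto
  have hbnd : b.Nodup := by tauto
  have hdab : a.Disjoint b := fun x hx hy => hnd.2.2.2 x hx x (Or.inr hy) rfl
  -- adjacency
  have hDadj : ∀ pr ∈ ((u :: (a ++ v :: b)) ++ [u]).zip (((u :: (a ++ v :: b)) ++ [u]).tail),
      D.Adj pr.1 pr.2 := by
    intro pr hpr
    have : pr ∈ cycArcs (u :: (a ++ v :: b)) := by
      rw [cycArcs_cons]
      exact hpr
    rw [harcs] at this
    exact hC.2.2 pr this
  have hGadj : ∀ pr ∈ ((u :: (a ++ v :: b)) ++ [u]).zip (((u :: (a ++ v :: b)) ++ [u]).tail),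
      (underlyingGraph D).Adj pr.1 pr.2 := by
    intro pr hpr
    have hD := hDadj pr hpr
    exact ⟨fun he => hloopless _ (he ▸ hD), Or.inl hD⟩
  -- the walk p along u :: a ++ [v]
  have hsplit1 : (u :: (a ++ [v])) ++ (b ++ [u]) = (u :: (a ++ v :: b)) ++ [u] := by
    simp
  obtain ⟨p, hpsup⟩ := walk_of_chain a u v (fun pr hpr => by
    refine hGadj pr ?_
    rw [← hsplit1]
    exact zip_tail_append_right hpr)
  have hsplit2 : (u :: a) ++ (v :: (b ++ [u])) = (u :: (a ++ v :: b)) ++ [u] := by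
    simp
  obtain ⟨q0, hq0sup⟩ := walk_of_chain b v u (fun pr hpr => by
    refine hGadj pr ?_
    rw [← hsplit2]
    exact zip_tail_append_left hpr)
  have hq0path : q0.IsPath := by
    rw [SimpleGraph.Walk.isPath_def, hq0sup]
    simp only [List.nodup_cons, List.mem_append, List.mem_cons, List.nodup_append,
      List.disjoint_cons_right, List.mem_singleton, List.disjoint_singleton,
      List.nodup_singleton]
    refine ⟨?_, ?_⟩ <;> try tauto
    exact ⟨hbnd, by simp, fun x hx y hy hxy => hub (by simp at hy; rw [← hy, ← hxy]; exact hx)⟩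
  have hppath : p.IsPath := by
    rw [SimpleGraph.Walk.isPath_def, hpsup]
    simp only [List.nodup_cons, List.mem_append, List.mem_cons, List.nodup_append,
      List.mem_singleton, List.disjoint_singleton, List.nodup_singleton]
    refine ⟨?_, ?_⟩ <;> try tauto
  refine ⟨p, q0.reverse, hppath, hq0path.reverse, ?_, ?_, ?_⟩
  · -- internal disjointness
    intro w hwp hwq
    rw [hpsup] at hwp
    rw [SimpleGraph.Walk.support_reverse, hq0sup] at hwq
    simp at hwp hwq
    have hdab' : ∀ x, x ∈ a → x ∈ b → False := fun _ h h' => hdab h h'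
    tauto
  · -- p.support = [u, v] → (u, v) ∈ cycArcs l
    intro hps
    rw [hpsup] at hps
    have ha : a = [] := by
      by_contra hne
      obtain ⟨z, a', rfl⟩ := List.exists_cons_of_ne_nil hne
      have h2 := congrArg List.length hps
      simp only [List.length_cons, List.length_append, List.length_singleton] at h2
      omega
    subst ha
    rw [← harcs, cycArcs_cons]
    exact mem_zip_tail_iff.mpr ⟨[], b ++ [u], by simp⟩
  · -- p ≠ q or both supports are [u, v]
    rcases eq_or_ne a [] with ha | ha
    · rcases eq_or_ne b [] with hb | hb
      · right
        subst ha hb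
        constructor
        · rw [hpsup]; rfl
        · rw [SimpleGraph.Walk.support_reverse, hq0sup]; rfl
      · left
        obtain ⟨y, b', rfl⟩ := List.exists_cons_of_ne_nil hb
        intro he
        have hy : y ∈ q0.reverse.support := by
          rw [SimpleGraph.Walk.support_reverse, hq0sup]
          simp
        rw [← he, hpsup] at hy
        subst ha
        simp at hy
        have h1 : y ≠ u := fun h => hub (by rw [← h]; simp)
        have h2 : y ≠ v := fun h => hvb (by rw [← h]; simp)
        tauto
    · left
      obtain ⟨x, a', rfl⟩ := List.exists_cons_of_ne_nil ha
      intro he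
      have hx : x ∈ p.support := by rw [hpsup]; simp
      rw [he, SimpleGraph.Walk.support_reverse, hq0sup] at hx
      simp at hx
      have h1 : x ≠ u := fun h => hua (by rw [← h]; simp)
      have h2 : x ≠ v := fun h => hva (by rw [← h]; simp)
      have h3 : x ∉ b := fun h => hdab (by simp) h
      tauto

end core

section core2

variable {V : Type*}

lemma mk_cycle (D : Digraph V) (hsym : ∀ x y, D.Adj x y → D.Adj y x)
    {u v : V} (huv : u ≠ v)
    (p q : (underlyingGraph D).Walk u v) (hp : p.IsPath) (hq : q.IsPath)
    (hdis : ∀ w, w ∈ p.support → w ∈ q.support → w = u ∨ w = v) :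
    IsSCycle D {u, v} (p.support ++ q.support.tail.reverse.tail) ∧
      ∀ pr ∈ cycArcs (p.support ++ q.support.tail.reverse.tail),
        pr ∈ p.support.zip p.support.tail ∨
          (pr.2, pr.1) ∈ q.support.zip q.support.tail := by
  set B := q.support.tail.reverse with hB
  set r := p.append q.reverse with hr
  have hqt : q.support.tail ≠ [] := support_tail_ne_nil q huv
  have hBne : B ≠ [] := by
    rw [hB]
    simpa using hqt
  have hql : q.support.getLast? = some v := by
    rw [List.getLast?_eq_getLast q.support_ne_nil, q.getLast_support]
  have hqrev : q.support.reverse = B ++ [u] := by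
    rw [hB]
    conv_lhs => rw [q.support_eq_cons]
    simp
  have hrs : r.support = p.support ++ (B.tail ++ [u]) := by
    rw [hr, SimpleGraph.Walk.support_append, SimpleGraph.Walk.support_reverse, hqrev]
    obtain ⟨z, B', hzB⟩ := List.exists_cons_of_ne_nil hBne
    rw [hzB]
    rfl
  have hls : (p.support ++ B.tail) ++ [u] = r.support := by
    rw [hrs, List.append_assoc]
  -- head of B is v
  have hBhead : B = v :: B.tail := by
    have h1 : B.head? = some v := by
      rw [hB, List.head?_reverse]
      obtain ⟨z, t, hzt⟩ := List.exists_cons_of_ne_nil hqt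
      have hsup : q.support = u :: z :: t := by
        conv_lhs => rw [q.support_eq_cons, hzt]
      have h2 := hql
      rw [hsup, List.getLast?_cons_cons] at h2
      rw [hzt]
      exact h2
    exact (List.cons_head?_tail h1).symm
  have hBnd : B.Nodup := by
    rw [hB, List.nodup_reverse]
    exact (List.tail_sublist _).nodup hq.support_nodup
  have hvBt : v ∉ B.tail := by
    intro hmem
    have := hBhead ▸ hBnd
    rw [List.nodup_cons] at this
    exact this.1 hmem
  have huB : u ∉ B := by
    rw [hB, List.mem_reverse]
    intro hmem
    have := hq.support_nodup
    rw [q.support_eq_cons, List.nodup_cons] at this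
    exact this.1 hmem
  have hBtq : ∀ w, w ∈ B.tail → w ∈ q.support := by
    intro w hw
    have : w ∈ B := (List.tail_sublist B).mem hw
    rw [hB, List.mem_reverse] at this
    exact (List.tail_sublist _).mem this
  have hdisj : p.support.Disjoint B.tail := by
    intro w hwp hwB
    rcases hdis w hwp (hBtq w hwB) with rfl | rfl
    · exact huB ((List.tail_sublist B).mem hwB)
    · exact hvBt hwB
  have hps2 : 2 ≤ p.support.length := by
    cases p with
    | nil => exact absurd rfl huv
    | cons ha wa =>
      rw [SimpleGraph.Walk.support_cons, List.length_cons]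
      have : 0 < wa.support.length := List.length_pos_iff.mpr wa.support_ne_nil
      omega
  have hlc : p.support ++ B.tail = u :: (p.support.tail ++ B.tail) := by
    conv_lhs => rw [p.support_eq_cons]
    rfl
  have harcs : ∀ pr ∈ cycArcs (p.support ++ B.tail),
      pr ∈ r.support.zip r.support.tail := by
    intro pr hpr
    rw [hlc, cycArcs_cons] at hpr
    rw [← hls, hlc]
    exact hpr
  refine ⟨⟨⟨?_, ?_, ?_⟩, ?_⟩, ?_⟩
  · -- Nodup
    rw [List.nodup_append]
    exact ⟨hp.support_nodup, (List.tail_sublist B).nodup hBnd, fun x hx y hy hxy => hdisj hx (hxy ▸ hy)⟩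
  · -- length
    rw [List.length_append]
    omega
  · -- adjacency
    intro pr hpr
    have h1 : pr ∈ r.support.zip r.support.tail := harcs pr hpr
    have h2 := walk_zip_tail r pr h1
    have h3 : pr.1 ≠ pr.2 ∧ (D.Adj pr.1 pr.2 ∨ D.Adj pr.2 pr.1) := h2
    exact h3.2.elim id (hsym _ _)
  · -- S ⊆ vertices
    intro s hs
    rcases hs with rfl | rfl
    · exact List.mem_append_left _ p.start_mem_support
    · exact List.mem_append_left _ p.end_mem_support
  · -- arcs containment
    intro pr hpr
    have h1 : pr ∈ r.support.zip r.support.tail := harcs pr hpr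
    have hplast : p.support.getLast p.support_ne_nil = v := p.getLast_support
    have hpd : p.support = p.support.dropLast ++ [v] := by
      conv_lhs => rw [← List.dropLast_append_getLast p.support_ne_nil]
      rw [hplast]
    have hrs2 : r.support = p.support.dropLast ++ v :: (B.tail ++ [u]) := by
      rw [hrs]
      conv_lhs => rw [hpd]
      rw [List.append_assoc, List.singleton_append]
    rw [hrs2] at h1
    rcases consec_append_split _ _ _ _ h1 with h | h
    · left
      rw [hpd]
      exact h
    · right
      have hqrev2 : q.support.reverse = v :: (B.tail ++ [u]) := by
        rw [hqrev]
        conv_lhs => rw [hBhead]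
        rfl
      rw [← hqrev2] at h
      obtain ⟨x, y⟩ := pr
      exact zip_tail_reverse.mp h
  end core2

section core3

variable {V : Type*}

lemma both_supports {G : SimpleGraph V} {u v : V} (huv : u ≠ v) {p q : G.Walk u v}
    (hp : p.IsPath) (hq : q.IsPath) (hne : p ≠ q)
    (hdis : ∀ w, w ∈ p.support → w ∈ q.support → w = u ∨ w = v)
    {a b : V} (h1 : (a, b) ∈ p.support.zip p.support.tail)
    (h2 : (a, b) ∈ q.support.zip q.support.tail) : False := by
  have hmem1 := mem_zip_tail_mem h1
  have hmem2 := mem_zip_tail_mem h2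
  have hab : a ≠ b := mem_zip_tail_ne hp.support_nodup h1
  have hplast : p.support.getLast? = some v := by
    rw [List.getLast?_eq_getLast p.support_ne_nil, p.getLast_support]
  have hqlast : q.support.getLast? = some v := by
    rw [List.getLast?_eq_getLast q.support_ne_nil, q.getLast_support]
  rcases hdis a hmem1.1 hmem2.1 with rfl | rfl
  · rcases hdis b hmem1.2 hmem2.2 with rfl | rfl
    · exact hab rfl
    · have hps := L_pair hp.support_nodup p.support_eq_cons hplast h1
      have hqs := L_pair hq.support_nodup q.support_eq_cons hqlast h2
      exact hne (walk_support_pair p hps q hqs)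
  · rcases hdis b hmem1.2 hmem2.2 with rfl | rfl
    · exact L_head hp.support_nodup p.support_eq_cons h1
    · exact hab rfl

end core3

/-- For a symmetric digraph `D` and distinct vertices `u, v` with
`S = {u, v}`, `D` contains two arc-disjoint `S`-cycles iff the underlying undirected
graph of `D` contains two internally disjoint paths between `u` and `v`. -/
theorem symmetric_two_arcDisjoint_iff_two_internallyDisjoint_paths {V : Type*}
    (D : Digraph V) (hloopless : ∀ v, ¬ D.Adj v v)
    (hsym : ∀ u v, D.Adj u v → D.Adj v u) (u v : V) (huv : u ≠ v) :
    ArcDisjointSCycles D {u, v} 2 ↔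
      ∃ p q : (underlyingGraph D).Walk u v, p.IsPath ∧ q.IsPath ∧ p ≠ q ∧
        ∀ w, w ∈ p.support → w ∈ q.support → w = u ∨ w = v := by
  constructor
  · rintro ⟨f, hf, hdisj⟩
    have hu0 : u ∈ f 0 := (hf 0).2 u (by simp)
    have hv0 : v ∈ f 0 := (hf 0).2 v (by simp)
    obtain ⟨p, q, hp, hq, hint, hpuv, halt⟩ := cycle_split D hloopless huv (hf 0).1 hu0 hv0
    rcases halt with hne | ⟨hps, hqs⟩
    · exact ⟨p, q, hp, hq, hne, hint⟩
    · have hu1 : u ∈ f 1 := (hf 1).2 u (by simp)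
      have hv1 : v ∈ f 1 := (hf 1).2 v (by simp)
      obtain ⟨p', q', hp', hq', hint', hpuv', halt'⟩ :=
        cycle_split D hloopless huv (hf 1).1 hu1 hv1
      have h01 : (u, v) ∈ cycArcs (f 0) := hpuv hps
      have hd := hdisj 0 1 (by decide)
      have hp'ne : p'.support ≠ [u, v] := fun h => Set.disjoint_left.mp hd h01 (hpuv' h)
      refine ⟨p, p', hp, hp', ?_, ?_⟩
      · intro he
        apply hp'ne
        rw [← he]
        exact hps
      · intro w hw _
        rw [hps] at hw
        simpa using hw
  · rintro ⟨p, q, hp, hq, hne, hdis⟩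
    have hdis' : ∀ w, w ∈ q.support → w ∈ p.support → w = u ∨ w = v :=
      fun w h h' => hdis w h' h
    obtain ⟨hc1, harc1⟩ := mk_cycle D hsym huv p q hp hq hdis
    obtain ⟨hc2, harc2⟩ := mk_cycle D hsym huv q p hq hp hdis'
    refine ⟨![p.support ++ q.support.tail.reverse.tail,
      q.support ++ p.support.tail.reverse.tail], ?_, ?_⟩
    · intro i
      fin_cases i
      · simpa using hc1
      · simpa using hc2
    · have key : ∀ pr, pr ∈ cycArcs (p.support ++ q.support.tail.reverse.tail) →
          pr ∈ cycArcs (q.support ++ p.support.tail.reverse.tail) → False := by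
        intro pr h1 h2
        obtain ⟨a, b⟩ := pr
        rcases harc1 _ h1 with ha1 | ha1 <;> rcases harc2 _ h2 with ha2 | ha2
        · exact both_supports huv hp hq hne hdis ha1 ha2
        · exact no_both_directions hp.support_nodup ha1 ha2
        · exact no_both_directions hq.support_nodup ha2 ha1
        · exact both_supports huv hq hp (Ne.symm hne) hdis' ha1 ha2
      have hd12 : Disjoint (cycArcs (p.support ++ q.support.tail.reverse.tail))
          (cycArcs (q.support ++ p.support.tail.reverse.tail)) :=
        Set.disjoint_left.mpr fun pr h1 h2 => (key pr h1 h2).elim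
      intro i j hij
      fin_cases i <;> fin_cases j
      · exact absurd rfl hij
      · simpa using hd12
      · simpa using hd12.symm
      · exact absurd rfl hij
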